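/- For every integer n ≥ 1, every m ∈ {1,...,n} and every K > 0, the normalized dual edge Boltzmann factor on the Nishimori line satisfies u_m^*(K) = (tanh K)^{m+1} if m is odd and u_m^*(K) = (tanh K)^m if m is even. -/

import Mathlib

open Real Finset

/-- Nishimori-line probability `p = e^K / (e^K + e^{-K})`. -/
noncomputable def nlProb (K : ℝ) : ℝ := exp K / (exp K + exp (-K))

/-- The averaged edge Boltzmann factor
`x_k(K) = p e^{(n-2k)K} + (1-p) e^{-(n-2k)K}` on the Nishimori line. -/
noncomputable def edgeBoltzmann (n k : ℕ) (K : ℝ) : ℝ :=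
  nlProb K * exp (((n : ℝ) - 2 * k) * K) +
    (1 - nlProb K) * exp (-(((n : ℝ) - 2 * k) * K))

/-- `D_m^k` : the coefficient of `t^k` in the polynomial `(1-t)^m (1+t)^{n-m}`. -/
noncomputable def dualCoeff (n m k : ℕ) : ℝ :=
  (((1 - Polynomial.X) ^ m * (1 + Polynomial.X) ^ (n - m) : Polynomial ℝ)).coeff k

/-- The dual edge Boltzmann factor `x_m^*(K) = 2^{-n/2} Σ_{k=0}^n D_m^k x_k(K)`. -/
noncomputable def dualEdgeBoltzmann (n m : ℕ) (K : ℝ) : ℝ :=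
  (2 : ℝ) ^ (-(n : ℝ) / 2) * ∑ k ∈ range (n + 1), dualCoeff n m k * edgeBoltzmann n k K

/-- The normalized dual edge Boltzmann factor `u_m^*(K) = x_m^*(K) / x_0^*(K)`. -/
noncomputable def normDualEdgeBoltzmann (n m : ℕ) (K : ℝ) : ℝ :=
  dualEdgeBoltzmann n m K / dualEdgeBoltzmann n 0 K

lemma sum_dualCoeff_mul (n m : ℕ) (hmn : m ≤ n) (t : ℝ) :
    ∑ k ∈ range (n + 1), dualCoeff n m k * t ^ k
      = (1 - t) ^ m * (1 + t) ^ (n - m) := by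
  have hdeg : (((1 - Polynomial.X) ^ m * (1 + Polynomial.X) ^ (n - m) : Polynomial ℝ)).natDegree < n + 1 := by
    apply Nat.lt_succ_of_le
    refine le_trans (Polynomial.natDegree_mul_le) ?_
    have h1 : ((1 - Polynomial.X : Polynomial ℝ) ^ m).natDegree ≤ m :=
      le_trans Polynomial.natDegree_pow_le (by
        have : (1 - Polynomial.X : Polynomial ℝ).natDegree ≤ 1 :=
          le_trans (Polynomial.natDegree_sub_le _ _) (by simp)
        nlinarith)
    have h2 : ((1 + Polynomial.X : Polynomial ℝ) ^ (n - m)).natDegree ≤ n - m :=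
      le_trans Polynomial.natDegree_pow_le (by
        have : (1 + Polynomial.X : Polynomial ℝ).natDegree ≤ 1 :=
          le_trans (Polynomial.natDegree_add_le _ _) (by simp)
        nlinarith)
    omega
  have := Polynomial.eval_eq_sum_range' hdeg t
  simp only [Polynomial.eval_mul, Polynomial.eval_pow, Polynomial.eval_sub,
    Polynomial.eval_add, Polynomial.eval_one, Polynomial.eval_X] at this
  rw [show (∑ k ∈ range (n + 1), dualCoeff n m k * t ^ k)
      = ∑ i ∈ range (n + 1), ((1 - Polynomial.X) ^ m * (1 + Polynomial.X) ^ (n - m)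
        : Polynomial ℝ).coeff i * t ^ i from rfl, ← this]

lemma key_sum (n m : ℕ) (hmn : m ≤ n) (K : ℝ) :
    ∑ k ∈ range (n + 1), dualCoeff n m k * edgeBoltzmann n k K
      = nlProb K * (exp K - exp (-K)) ^ m * (exp K + exp (-K)) ^ (n - m)
        + (1 - nlProb K) * (exp (-K) - exp K) ^ m * (exp (-K) + exp K) ^ (n - m) := by
  have hedge : ∀ k : ℕ, edgeBoltzmann n k K
      = nlProb K * exp ((n : ℝ) * K) * (exp (-2 * K)) ^ k
        + (1 - nlProb K) * exp (-((n : ℝ) * K)) * (exp (2 * K)) ^ k := by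
    intro k
    unfold edgeBoltzmann
    rw [show (-(((n : ℝ) - 2 * k) * K)) = -((n : ℝ) * K) + (k : ℝ) * (2 * K) by ring,
      show (((n : ℝ) - 2 * k) * K) = (n : ℝ) * K + (k : ℝ) * (-2 * K) by ring,
      Real.exp_add, Real.exp_add, ← Real.exp_nat_mul, ← Real.exp_nat_mul]
    ring
  simp_rw [hedge]
  have split : ∑ k ∈ range (n + 1), dualCoeff n m k *
      (nlProb K * exp ((n : ℝ) * K) * (exp (-2 * K)) ^ k
        + (1 - nlProb K) * exp (-((n : ℝ) * K)) * (exp (2 * K)) ^ k)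
      = nlProb K * exp ((n : ℝ) * K) *
          (∑ k ∈ range (n + 1), dualCoeff n m k * (exp (-2 * K)) ^ k)
        + (1 - nlProb K) * exp (-((n : ℝ) * K)) *
          (∑ k ∈ range (n + 1), dualCoeff n m k * (exp (2 * K)) ^ k) := by
    rw [Finset.mul_sum, Finset.mul_sum, ← Finset.sum_add_distrib]
    exact Finset.sum_congr rfl fun k _ => by ring
  rw [split, sum_dualCoeff_mul n m hmn, sum_dualCoeff_mul n m hmn]
  have hn' : exp ((n : ℝ) * K) = exp K ^ m * exp K ^ (n - m) := by
    rw [← pow_add, Nat.add_sub_cancel' hmn, ← Real.exp_nat_mul]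
  have hn'' : exp (-((n : ℝ) * K)) = exp (-K) ^ m * exp (-K) ^ (n - m) := by
    rw [← pow_add, Nat.add_sub_cancel' hmn, ← Real.exp_nat_mul]
    ring_nf
  rw [hn', hn'']
  rw [show nlProb K * (exp K ^ m * exp K ^ (n - m)) *
      ((1 - exp (-2 * K)) ^ m * (1 + exp (-2 * K)) ^ (n - m))
    = nlProb K * (exp K * (1 - exp (-2 * K))) ^ m * (exp K * (1 + exp (-2 * K))) ^ (n - m) by
      rw [mul_pow, mul_pow]; ring]
  rw [show (1 - nlProb K) * (exp (-K) ^ m * exp (-K) ^ (n - m)) *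
      ((1 - exp (2 * K)) ^ m * (1 + exp (2 * K)) ^ (n - m))
    = (1 - nlProb K) * (exp (-K) * (1 - exp (2 * K))) ^ m *
        (exp (-K) * (1 + exp (2 * K))) ^ (n - m) by
      rw [mul_pow, mul_pow]; ring]
  have e1 : exp K * (1 - exp (-2 * K)) = exp K - exp (-K) := by
    rw [mul_sub, mul_one, ← Real.exp_add]; ring_nf
  have e2 : exp K * (1 + exp (-2 * K)) = exp K + exp (-K) := by
    rw [mul_add, mul_one, ← Real.exp_add]; ring_nf
  have e3 : exp (-K) * (1 - exp (2 * K)) = exp (-K) - exp K := by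
    rw [mul_sub, mul_one, ← Real.exp_add]; ring_nf
  have e4 : exp (-K) * (1 + exp (2 * K)) = exp (-K) + exp K := by
    rw [mul_add, mul_one, ← Real.exp_add]; ring_nf
  rw [e1, e2, e3, e4]

/-- For every `n ≥ 1`, `m ∈ {1,…,n}` and `K > 0`, the normalized dual edge
Boltzmann factor satisfies `u_m^*(K) = (tanh K)^{m+1}` if `m` is odd and
`u_m^*(K) = (tanh K)^m` if `m` is even. -/
theorem normDualEdgeBoltzmann_eq (n : ℕ) (hn : 1 ≤ n) (m : ℕ) (hm1 : 1 ≤ m) (hmn : m ≤ n)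
    (K : ℝ) (hK : 0 < K) :
    normDualEdgeBoltzmann n m K =
      if Odd m then (tanh K) ^ (m + 1) else (tanh K) ^ m := by
  have hc : (0 : ℝ) < exp K + exp (-K) := by positivity
  set c := exp K + exp (-K) with hcdef
  set s := exp K - exp (-K) with hsdef
  have hp : nlProb K = exp K / c := rfl
  have htanh : tanh K = s / c := by
    rw [Real.tanh_eq_sinh_div_cosh, Real.sinh_eq, Real.cosh_eq]
    field_simp
    rw [hcdef, hsdef]; ring
  have hS0 : ∑ k ∈ range (n + 1), dualCoeff n 0 k * edgeBoltzmann n k K = c ^ n := by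
    rw [key_sum n 0 (Nat.zero_le n) K]
    simp only [pow_zero, Nat.sub_zero, one_mul]
    rw [show exp (-K) + exp K = c by rw [hcdef]; ring]
    ring
  have hSm : ∑ k ∈ range (n + 1), dualCoeff n m k * edgeBoltzmann n k K
      = (nlProb K + (1 - nlProb K) * (-1) ^ m) * s ^ m * c ^ (n - m) := by
    rw [key_sum n m hmn K]
    rw [show exp (-K) - exp K = (-1) * s by rw [hsdef]; ring,
      show exp (-K) + exp K = c by rw [hcdef]; ring, mul_pow]
    ring
  have h2 : ((2 : ℝ) ^ (-(n : ℝ) / 2)) ≠ 0 := by positivity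
  have hcn : c ^ n ≠ 0 := by positivity
  unfold normDualEdgeBoltzmann dualEdgeBoltzmann
  rw [hS0, hSm, mul_div_mul_left _ _ h2]
  have hcsplit : c ^ n = c ^ (n - m) * c ^ m := by
    rw [← pow_add]; congr 1; omega
  rcases Nat.even_or_odd m with he | ho
  · rw [if_neg (by simpa using he), he.neg_one_pow]
    rw [htanh, div_pow, hcsplit]
    have hcm : (c : ℝ) ^ m ≠ 0 := by positivity
    have hcnm : (c : ℝ) ^ (n - m) ≠ 0 := by positivity
    field_simp
    ring
  · rw [if_pos ho, ho.neg_one_pow]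
    have hfac : nlProb K + (1 - nlProb K) * (-1) = s / c := by
      rw [hp, hsdef, hcdef]; field_simp; ring
    rw [hfac, htanh, div_pow, hcsplit]
    have hcm : (c : ℝ) ^ m ≠ 0 := by positivity
    have hcnm : (c : ℝ) ^ (n - m) ≠ 0 := by positivity
    rw [pow_succ]
    field_simp
    ring
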